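/- For every n ≥ 1, m(Kₙ) ≤ m(S_{n+1}), where Kₙ is the complete graph on n vertices and S_{n+1} = K_{1,n} is the star on n+1 vertices. -/

import Mathlib

/-- `c` is a subgraph sum-distinct (SSD) assignment of `G`: all values are positive and
distinct nonempty vertex subsets inducing connected subgraphs have distinct sums. -/
def IsSSD {V : Type*} [Fintype V] (G : SimpleGraph V) (c : V → ℕ) : Prop :=
  (∀ v, 0 < c v) ∧ ∀ s t : Finset V, s.Nonempty → t.Nonempty →
    (G.induce (↑s : Set V)).Connected → (G.induce (↑t : Set V)).Connected →
    s ≠ t → ∑ v ∈ s, c v ≠ ∑ v ∈ t, c v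

/-- `m(G)`: the minimum over all SSD assignments `c` of `G` of the maximum weight. -/
noncomputable def mval {V : Type*} [Fintype V] (G : SimpleGraph V) : ℕ :=
  sInf {N | ∃ c : V → ℕ, IsSSD G c ∧ Finset.univ.sup c = N}

/-- `M(G)`: the minimum total weight of an SSD assignment of `G`. -/
noncomputable def Mval {V : Type*} [Fintype V] (G : SimpleGraph V) : ℕ :=
  sInf {N | ∃ c : V → ℕ, IsSSD G c ∧ ∑ v, c v = N}

/-- The star `S_{n+1} = K_{1,n}`: vertex `0` joined to the `n` other vertices. -/
def starGraph (n : ℕ) : SimpleGraph (Fin (n + 1)) where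
  Adj i j := i ≠ j ∧ (i = 0 ∨ j = 0)
  symm := by constructor; intro i j h; exact ⟨h.1.symm, h.2.symm⟩
  loopless := by constructor; intro i h; exact h.1 rfl

/-- Powers of two have distinct subset sums over `Fin m`. -/
lemma ssd_two_pow_inj {m : ℕ} (s t : Finset (Fin m))
    (h : ∑ v ∈ s, 2 ^ v.val = ∑ v ∈ t, 2 ^ v.val) : s = t := by
  have hs : ∑ v ∈ s, 2 ^ v.val = ∑ i ∈ s.image Fin.val, 2 ^ i :=
    (Finset.sum_image (fun a _ b _ hab => Fin.val_injective hab)).symm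
  have ht : ∑ v ∈ t, 2 ^ v.val = ∑ i ∈ t.image Fin.val, 2 ^ i :=
    (Finset.sum_image (fun a _ b _ hab => Fin.val_injective hab)).symm
  have : s.image Fin.val = t.image Fin.val := by
    have := congrArg (fun k => Nat.bitIndices k |>.toFinset) (hs ▸ ht ▸ h)
    simpa using this
  exact Finset.image_injective Fin.val_injective this

/-- Any vertex set of the star containing the center induces a connected subgraph. -/
lemma star_induce_connected (n : ℕ) (A : Finset (Fin (n+1))) (h0 : (0 : Fin (n+1)) ∈ A) :
    ((starGraph n).induce (↑A : Set (Fin (n+1)))).Connected := by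
  rw [SimpleGraph.connected_iff]
  constructor
  · intro u v
    have key : ∀ w : (↑A : Set (Fin (n+1))), ((starGraph n).induce _).Reachable w ⟨0, h0⟩ := by
      intro w
      by_cases hw : (w : Fin (n+1)) = 0
      · have : w = ⟨0, h0⟩ := Subtype.ext hw
        rw [this]
      · exact SimpleGraph.Adj.reachable (by exact ⟨hw, Or.inr rfl⟩)
    exact (key u).trans (key v).symm
  · exact ⟨⟨0, h0⟩⟩

/-- `m(Kₙ) ≤ m(S_{n+1})`. -/
theorem stmt_8 (n : ℕ) (hn : 1 ≤ n) :
    mval (⊤ : SimpleGraph (Fin n)) ≤ mval (starGraph n) := by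
  -- The star has an SSD assignment (powers of two), so the defining set is nonempty.
  have hSSDpow : IsSSD (starGraph n) (fun v => 2 ^ v.val) := by
    refine ⟨fun v => Nat.pow_pos (by norm_num), ?_⟩
    intro s t _ _ _ _ hst h
    exact hst (ssd_two_pow_inj s t h)
  have hSne : {N | ∃ c : Fin (n+1) → ℕ, IsSSD (starGraph n) c ∧ Finset.univ.sup c = N}.Nonempty :=
    ⟨_, _, hSSDpow, rfl⟩
  obtain ⟨c, hc, hcsup⟩ := Nat.sInf_mem hSne
  -- `c` is an SSD of the star whose max is exactly `mval (starGraph n)`.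
  set c' : Fin n → ℕ := fun i => c i.succ with hc'
  have hinj : Function.Injective (Fin.succ : Fin n → Fin (n+1)) := Fin.succ_injective n
  have hSSD' : IsSSD (⊤ : SimpleGraph (Fin n)) c' := by
    refine ⟨fun v => hc.1 _, ?_⟩
    intro s t hs ht _ _ hst h
    set S' : Finset (Fin (n+1)) := insert 0 (s.image Fin.succ) with hS'
    set T' : Finset (Fin (n+1)) := insert 0 (t.image Fin.succ) with hT'
    have h0S : (0 : Fin (n+1)) ∈ S' := Finset.mem_insert_self _ _
    have h0T : (0 : Fin (n+1)) ∈ T' := Finset.mem_insert_self _ _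
    have hnotS : (0 : Fin (n+1)) ∉ s.image Fin.succ := by
      simp [Fin.succ_ne_zero]
    have hnotT : (0 : Fin (n+1)) ∉ t.image Fin.succ := by
      simp [Fin.succ_ne_zero]
    have hST : S' ≠ T' := by
      intro hEq
      apply hst
      have himg : s.image Fin.succ = t.image Fin.succ := by
        have := congrArg (Finset.erase · 0) hEq
        simpa [hS', hT', Finset.erase_insert hnotS, Finset.erase_insert hnotT] using this
      exact Finset.image_injective hinj himg
    have hsum := hc.2 S' T' ⟨0, h0S⟩ ⟨0, h0T⟩
      (star_induce_connected n S' h0S) (star_induce_connected n T' h0T) hST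
    apply hsum
    have hSsum : ∑ v ∈ S', c v = c 0 + ∑ i ∈ s, c i.succ := by
      rw [hS', Finset.sum_insert hnotS, Finset.sum_image (fun a _ b _ hab => hinj hab)]
    have hTsum : ∑ v ∈ T', c v = c 0 + ∑ i ∈ t, c i.succ := by
      rw [hT', Finset.sum_insert hnotT, Finset.sum_image (fun a _ b _ hab => hinj hab)]
    rw [hSsum, hTsum, h]
  have hle : Finset.univ.sup c' ≤ Finset.univ.sup c :=
    Finset.sup_le fun i _ => Finset.le_sup (Finset.mem_univ i.succ)
  calc mval (⊤ : SimpleGraph (Fin n)) ≤ Finset.univ.sup c' :=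
        Nat.sInf_le ⟨c', hSSD', rfl⟩
    _ ≤ Finset.univ.sup c := hle
    _ = mval (starGraph n) := hcsup
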